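/- Let K be a finite group acting on a finite-dimensional Hilbert space H by a unitary representation ρ, and suppose H decomposes as an orthogonal direct sum of two irreducible invariant subspaces M₁ and M₂ of dimensions d₁ and d₂, on which ρ acts by inequivalent irreducible representations. Let P₁, P₂ be the orthogonal projections onto M₁, M₂. Then for nonzero f ∈ H, the orbit {ρ(ξ)f}_{ξ∈K} is a tight frame for H if and only if ‖P₁f‖²/d₁ = ‖P₂f‖²/d₂. -/

import Mathlib

open scoped InnerProductSpace

local notation "⟪" x ", " y "⟫" => @inner ℂ _ _ x y

section Aux

variable {H : Type*} [NormedAddCommGroup H] [InnerProductSpace ℂ H] [FiniteDimensional ℂ H]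

private theorem aux_sub_mem {M : Submodule ℂ H} (v : H) :
    v - (M.orthogonalProjectionOnto v : H) ∈ Mᗮ :=
  Submodule.sub_starProjection_mem_orthogonal v

private theorem aux_eq_self_iff {M : Submodule ℂ H} {v : H} :
    (M.orthogonalProjectionOnto v : H) = v ↔ v ∈ M :=
  Submodule.starProjection_eq_self_iff

private theorem aux_add (M : Submodule ℂ H) (w : H) :
    (M.orthogonalProjectionOnto w : H) + (Mᗮ.orthogonalProjectionOnto w : H) = w :=
  Submodule.starProjection_add_starProjection_orthogonal w

/-- If `M` and `Mᗮ` are invariant under the unitary `e`, then the orthogonal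
projection onto `M` commutes with `e`. -/
private theorem aux_proj_comm (M : Submodule ℂ H) (e : H ≃ₗᵢ[ℂ] H)
    (h1 : ∀ v ∈ M, e v ∈ M) (h2 : ∀ v ∈ Mᗮ, e v ∈ Mᗮ) (v : H) :
    (Submodule.orthogonalProjectionOnto M (e v) : H) = e (Submodule.orthogonalProjectionOnto M v) := by
  have hsplit : e v = e (Submodule.orthogonalProjectionOnto M v : H) + e (v - (Submodule.orthogonalProjectionOnto M v : H)) := by
    rw [← map_add]; congr 1; abel
  have hm : (e ((Submodule.orthogonalProjectionOnto M v : H)) : H) ∈ M := h1 _ (Submodule.orthogonalProjectionOnto M v).2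
  have hperp : e (v - (Submodule.orthogonalProjectionOnto M v : H)) ∈ Mᗮ :=
    h2 _ (aux_sub_mem v)
  rw [hsplit, map_add, Submodule.coe_add, aux_eq_self_iff.mpr hm,
    Submodule.orthogonalProjectionOnto_eq_zero_iff.mpr hperp]
  simp

/-- Parseval with respect to an orthonormal basis of a subspace computes the norm of
the orthogonal projection. -/
private theorem aux_parseval (M : Submodule ℂ H) {ι : Type*} [Fintype ι]
    (b : OrthonormalBasis ι ℂ M) (v : H) :
    ∑ i, ‖⟪(b i : H), v⟫‖ ^ 2 = ‖(Submodule.orthogonalProjectionOnto M v : H)‖ ^ 2 := by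
  have key : ∀ i, ⟪(b i : H), v⟫ = ⟪b i, Submodule.orthogonalProjectionOnto M v⟫ := by
    intro i
    have h0 : ⟪(b i : H), v - (Submodule.orthogonalProjectionOnto M v : H)⟫ = 0 :=
      (Submodule.mem_orthogonal _ _).1 (aux_sub_mem v) _ (b i).2
    have := inner_sub_right (𝕜 := ℂ) (b i : H) v (Submodule.orthogonalProjectionOnto M v : H)
    rw [h0] at this
    rw [Submodule.coe_inner]
    linear_combination -this
  have main : ∀ x : M, ∑ i, ‖⟪b i, x⟫‖ ^ 2 = ‖x‖ ^ 2 := by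
    intro x
    have h := b.sum_inner_mul_inner x x
    have h2 : ∀ i, ⟪x, b i⟫ * ⟪b i, x⟫ = ((‖⟪b i, x⟫‖ ^ 2 : ℝ) : ℂ) := by
      intro i
      rw [← inner_conj_symm x (b i), RCLike.conj_mul]
      norm_cast
    rw [Finset.sum_congr rfl fun i _ => h2 i, inner_self_eq_norm_sq_to_K] at h
    simpa [← Complex.ofReal_pow] using congrArg Complex.re h
  calc ∑ i, ‖⟪(b i : H), v⟫‖ ^ 2 = ∑ i, ‖⟪b i, Submodule.orthogonalProjectionOnto M v⟫‖ ^ 2 := by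
        simp_rw [key]
    _ = ‖Submodule.orthogonalProjectionOnto M v‖ ^ 2 := main _
    _ = ‖(Submodule.orthogonalProjectionOnto M v : H)‖ ^ 2 := by rw [Submodule.coe_norm]

variable {K : Type*} [Group K] [Fintype K]

/-- Trace-type computation: summing `‖⟪b i, ρ ξ f⟫‖²` over an orthonormal basis of an
invariant subspace `M` and over the group gives `|K| · ‖P_M f‖²`. -/
private theorem aux_trace (ρ : K →* (H ≃ₗᵢ[ℂ] H)) (M : Submodule ℂ H)
    (h1 : ∀ ξ : K, ∀ v ∈ M, ρ ξ v ∈ M) (h2 : ∀ ξ : K, ∀ v ∈ Mᗮ, ρ ξ v ∈ Mᗮ)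
    {ι : Type*} [Fintype ι] (b : OrthonormalBasis ι ℂ M) (f : H) :
    ∑ i, ∑ ξ : K, ‖⟪(b i : H), ρ ξ f⟫‖ ^ 2
      = (Fintype.card K : ℝ) * ‖(Submodule.orthogonalProjectionOnto M f : H)‖ ^ 2 := by
  rw [Finset.sum_comm]
  have key : ∀ ξ : K, ∑ i, ‖⟪(b i : H), ρ ξ f⟫‖ ^ 2
      = ‖(Submodule.orthogonalProjectionOnto M f : H)‖ ^ 2 := by
    intro ξ
    rw [aux_parseval M b (ρ ξ f), aux_proj_comm M (ρ ξ) (h1 ξ) (h2 ξ) f,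
      (ρ ξ).norm_map]
  rw [Finset.sum_congr rfl fun ξ _ => key ξ, Finset.sum_const, Finset.card_univ,
    nsmul_eq_mul]

/-- Schur: a `ρ`-commuting operator preserving an irreducible invariant subspace acts on it
as a scalar. -/
private theorem aux_scalar (ρ : K →* (H ≃ₗᵢ[ℂ] H)) (S : H →L[ℂ] H)
    (M : Submodule ℂ H) (hne : M ≠ ⊥)
    (hinv : ∀ ξ : K, ∀ v ∈ M, ρ ξ v ∈ M)
    (hirr : ∀ W : Submodule ℂ H, W ≤ M → (∀ ξ : K, ∀ v ∈ W, ρ ξ v ∈ W) → W = ⊥ ∨ W = M)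
    (hSM : ∀ v ∈ M, S v ∈ M)
    (hcomm : ∀ (η : K) (g : H), S (ρ η g) = ρ η (S g)) :
    ∃ c : ℂ, ∀ v ∈ M, S v = c • v := by
  haveI : Nontrivial M := Submodule.nontrivial_iff_ne_bot.mpr hne
  set S₁ : Module.End ℂ M := (S : H →ₗ[ℂ] H).restrict hSM with hS₁
  obtain ⟨c, hc⟩ := Module.End.exists_eigenvalue S₁
  refine ⟨c, ?_⟩
  set W : Submodule ℂ H := (Module.End.eigenspace S₁ c).map M.subtype with hW
  have hmemW : ∀ x : H, x ∈ W ↔ x ∈ M ∧ S x = c • x := by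
    intro x
    constructor
    · rintro ⟨u, hu, rfl⟩
      refine ⟨u.2, ?_⟩
      have := Module.End.mem_eigenspace_iff.1 hu
      have h2 := congrArg (M.subtype) this
      simpa [hS₁, LinearMap.restrict_apply] using h2
    · rintro ⟨hxM, hx⟩
      refine ⟨⟨x, hxM⟩, Module.End.mem_eigenspace_iff.2 ?_, rfl⟩
      apply Subtype.ext
      simpa [hS₁, LinearMap.restrict_apply] using hx
  have hWle : W ≤ M := Submodule.map_subtype_le _ _
  have hWinv : ∀ ξ : K, ∀ v ∈ W, ρ ξ v ∈ W := by
    intro ξ v hv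
    rw [hmemW] at hv ⊢
    refine ⟨hinv ξ v hv.1, ?_⟩
    rw [hcomm, hv.2, map_smul]
  have hWne : W ≠ ⊥ := by
    obtain ⟨v, hv, hv0⟩ := hc.exists_hasEigenvector
    intro hbot
    have : (v : H) ∈ W := (hmemW _).2 ⟨v.2, by
      have h2 := congrArg (M.subtype) (Module.End.mem_eigenspace_iff.1 hv)
      simpa [hS₁, LinearMap.restrict_apply] using h2⟩
    rw [hbot, Submodule.mem_bot] at this
    exact hv0 (Subtype.ext this)
  rcases hirr W hWle hWinv with h | h
  · exact absurd h hWne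
  · intro v hv
    exact ((hmemW v).1 (h ▸ hv)).2

end Aux
theorem orbit_tight_frame_iff_proj_ratio
    {K : Type*} [Group K] [Fintype K]
    {H : Type*} [NormedAddCommGroup H] [InnerProductSpace ℂ H] [FiniteDimensional ℂ H]
    (ρ : K →* (H ≃ₗᵢ[ℂ] H))
    (M₁ M₂ : Submodule ℂ H)
    (horth : M₂ = M₁ᗮ)
    (hinv₁ : ∀ ξ : K, ∀ v ∈ M₁, ρ ξ v ∈ M₁)
    (hinv₂ : ∀ ξ : K, ∀ v ∈ M₂, ρ ξ v ∈ M₂)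
    (hne₁ : M₁ ≠ ⊥) (hne₂ : M₂ ≠ ⊥)
    (hirr₁ : ∀ W : Submodule ℂ H, W ≤ M₁ → (∀ ξ : K, ∀ v ∈ W, ρ ξ v ∈ W) → W = ⊥ ∨ W = M₁)
    (hirr₂ : ∀ W : Submodule ℂ H, W ≤ M₂ → (∀ ξ : K, ∀ v ∈ W, ρ ξ v ∈ W) → W = ⊥ ∨ W = M₂)
    (hineq : ¬ ∃ T : M₁ ≃ₗ[ℂ] M₂, ∀ (ξ : K) (v w : M₁),
      (w : H) = ρ ξ (v : H) → ((T w : M₂) : H) = ρ ξ ((T v : M₂) : H))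
    (f : H) (hf : f ≠ 0) :
    (∃ A : ℝ, 0 < A ∧ ∀ g : H, ∑ ξ : K, ‖(inner ℂ g (ρ ξ f) : ℂ)‖ ^ 2 = A * ‖g‖ ^ 2)
      ↔ ‖(M₁.orthogonalProjectionOnto f : M₁)‖ ^ 2 / (Module.finrank ℂ M₁ : ℝ)
          = ‖(M₂.orthogonalProjectionOnto f : M₂)‖ ^ 2 / (Module.finrank ℂ M₂ : ℝ) := by
  subst horth
  classical
  have hcK : (0:ℝ) < (Fintype.card K : ℝ) := by exact_mod_cast Fintype.card_pos
  have hd₁ : (0:ℝ) < (Module.finrank ℂ M₁ : ℝ) := by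
    have h : Module.finrank ℂ M₁ ≠ 0 := fun h => hne₁ (Submodule.finrank_eq_zero.1 h)
    exact_mod_cast Nat.pos_of_ne_zero h
  have hd₂ : (0:ℝ) < (Module.finrank ℂ (M₁ᗮ : Submodule ℂ H) : ℝ) := by
    have h : Module.finrank ℂ (M₁ᗮ : Submodule ℂ H) ≠ 0 :=
      fun h => hne₂ (Submodule.finrank_eq_zero.1 h)
    exact_mod_cast Nat.pos_of_ne_zero h
  have hoo : (M₁ᗮᗮ : Submodule ℂ H) = M₁ := Submodule.orthogonal_orthogonal M₁
  have hinv₁' : ∀ ξ : K, ∀ v ∈ (M₁ᗮᗮ : Submodule ℂ H), ρ ξ v ∈ (M₁ᗮᗮ : Submodule ℂ H) := by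
    intro ξ v hv
    rw [hoo] at hv ⊢
    exact hinv₁ ξ v hv
  have tr₁ := aux_trace ρ M₁ hinv₁ hinv₂ (stdOrthonormalBasis ℂ M₁) f
  have tr₂ := aux_trace ρ M₁ᗮ hinv₂ hinv₁' (stdOrthonormalBasis ℂ (M₁ᗮ : Submodule ℂ H)) f
  have hb₁ : ∀ i, ‖((stdOrthonormalBasis ℂ M₁ i : M₁) : H)‖ = 1 := fun i => by
    rw [← Submodule.coe_norm]
    exact (stdOrthonormalBasis ℂ M₁).orthonormal.1 i
  have hb₂ : ∀ i, ‖((stdOrthonormalBasis ℂ (M₁ᗮ : Submodule ℂ H) i : (M₁ᗮ : Submodule ℂ H)) : H)‖ = 1 := fun i => by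
    rw [← Submodule.coe_norm]
    exact (stdOrthonormalBasis ℂ (M₁ᗮ : Submodule ℂ H)).orthonormal.1 i
  simp only [Submodule.coe_norm]
  constructor
  · rintro ⟨A, hA, hframe⟩
    have e₁ : A * (Module.finrank ℂ M₁ : ℝ)
        = (Fintype.card K : ℝ) * ‖(Submodule.orthogonalProjectionOnto M₁ f : H)‖ ^ 2 := by
      rw [← tr₁, Finset.sum_congr rfl fun i _ => hframe ((stdOrthonormalBasis ℂ M₁ i : M₁) : H)]
      simp only [hb₁, one_pow, mul_one, Finset.sum_const, Finset.card_univ, Fintype.card_fin,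
        nsmul_eq_mul]
      ring
    have e₂ : A * (Module.finrank ℂ (M₁ᗮ : Submodule ℂ H) : ℝ)
        = (Fintype.card K : ℝ) * ‖(Submodule.orthogonalProjectionOnto M₁ᗮ f : H)‖ ^ 2 := by
      rw [← tr₂, Finset.sum_congr rfl fun i _ =>
        hframe ((stdOrthonormalBasis ℂ (M₁ᗮ : Submodule ℂ H) i : (M₁ᗮ : Submodule ℂ H)) : H)]
      simp only [hb₂, one_pow, mul_one, Finset.sum_const, Finset.card_univ, Fintype.card_fin,
        nsmul_eq_mul]
      ring
    rw [div_eq_div_iff hd₁.ne' hd₂.ne']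
    have key : (Fintype.card K : ℝ)
          * (‖(Submodule.orthogonalProjectionOnto M₁ f : H)‖ ^ 2 * (Module.finrank ℂ (M₁ᗮ : Submodule ℂ H) : ℝ))
        = (Fintype.card K : ℝ)
          * (‖(Submodule.orthogonalProjectionOnto M₁ᗮ f : H)‖ ^ 2 * (Module.finrank ℂ M₁ : ℝ)) := by
      nlinarith [e₁, e₂]
    exact mul_left_cancel₀ hcK.ne' key
  · intro hratio
    set S : H →L[ℂ] H := ∑ ξ : K, (innerSL ℂ ((ρ ξ) f)).smulRight ((ρ ξ) f) with hSdef
    have hS_apply : ∀ g : H, S g = ∑ ξ : K, (inner ℂ ((ρ ξ) f) g : ℂ) • (ρ ξ) f := by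
      intro g
      rw [hSdef]
      simp [ContinuousLinearMap.sum_apply]
    have hsa : ∀ g h : H, (inner ℂ (S g) h : ℂ) = inner ℂ g (S h) := by
      intro g h
      rw [hS_apply, hS_apply, sum_inner, inner_sum]
      refine Finset.sum_congr rfl fun ξ _ => ?_
      rw [inner_smul_left, inner_smul_right, inner_conj_symm]
      ring
    have hmul : ∀ (η ξ : K) (x : H), ρ (η * ξ) x = ρ η (ρ ξ x) := by
      intro η ξ x
      rw [map_mul]
      rfl
    have hcomm : ∀ (η : K) (g : H), S (ρ η g) = ρ η (S g) := by
      intro η g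
      rw [hS_apply, hS_apply]
      have h1 : (ρ η) (∑ ξ : K, (inner ℂ ((ρ ξ) f) g : ℂ) • (ρ ξ) f)
          = ∑ ξ : K, (inner ℂ ((ρ ξ) f) g : ℂ) • (ρ η) ((ρ ξ) f) := by
        rw [map_sum]
        exact Finset.sum_congr rfl fun ξ _ => by rw [map_smul]
      rw [h1, ← Equiv.sum_comp (Equiv.mulLeft η)
        (fun ζ : K => (inner ℂ ((ρ ζ) f) ((ρ η) g) : ℂ) • (ρ ζ) f)]
      refine Finset.sum_congr rfl fun ξ _ => ?_
      simp only [Equiv.coe_mulLeft]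
      rw [hmul η ξ f, (ρ η).inner_map_map]
    have hquad : ∀ g : H, (inner ℂ g (S g) : ℂ) = ((∑ ξ : K, ‖(inner ℂ g (ρ ξ f) : ℂ)‖ ^ 2 : ℝ) : ℂ) := by
      intro g
      rw [hS_apply, inner_sum]
      push_cast
      refine Finset.sum_congr rfl fun ξ _ => ?_
      rw [inner_smul_right, ← inner_conj_symm ((ρ ξ) f) g, RCLike.conj_mul]
      norm_cast
    have hproj₂ : ∀ (ξ : K) (v : H),
        (Submodule.orthogonalProjectionOnto M₁ᗮ (ρ ξ v) : H) = ρ ξ (Submodule.orthogonalProjectionOnto M₁ᗮ v : H) :=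
      fun ξ v => aux_proj_comm M₁ᗮ (ρ ξ) (hinv₂ ξ) (hinv₁' ξ) v
    set T : M₁ →ₗ[ℂ] (M₁ᗮ : Submodule ℂ H) :=
      (((Submodule.orthogonalProjectionOnto M₁ᗮ : H →L[ℂ] (M₁ᗮ : Submodule ℂ H)) : H →ₗ[ℂ] (M₁ᗮ : Submodule ℂ H)).comp
        (S : H →ₗ[ℂ] H)).comp M₁.subtype with hTdef
    have hT_apply : ∀ v : M₁, (T v : H) = (Submodule.orthogonalProjectionOnto M₁ᗮ (S (v : H)) : H) := by
      intro v
      rw [hTdef]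
      rfl
    have hTint : ∀ (ξ : K) (v w : M₁), (w : H) = ρ ξ (v : H) → (T w : H) = ρ ξ (T v : H) := by
      intro ξ v w hw
      rw [hT_apply, hT_apply, hw, hcomm, hproj₂]
    have hT0 : T = 0 := by
      by_contra hT
      have hvex : ∃ v : M₁, T v ≠ 0 := by
        by_contra h
        push_neg at h
        exact hT (LinearMap.ext fun v => by simp [h v])
      obtain ⟨v₀, hv₀⟩ := hvex
      have hker : LinearMap.ker T = ⊥ := by
        have hWinv : ∀ ξ : K, ∀ x ∈ (LinearMap.ker T).map M₁.subtype,
            ρ ξ x ∈ (LinearMap.ker T).map M₁.subtype := by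
          rintro ξ x ⟨u, hu, rfl⟩
          simp only [SetLike.mem_coe, LinearMap.mem_ker] at hu
          refine ⟨⟨ρ ξ (u : H), hinv₁ ξ (u : H) u.2⟩, ?_, rfl⟩
          simp only [SetLike.mem_coe, LinearMap.mem_ker]
          have h1 := hTint ξ u ⟨ρ ξ (u : H), hinv₁ ξ (u : H) u.2⟩ rfl
          rw [hu] at h1
          apply ZeroMemClass.coe_eq_zero.1
          rw [h1]
          simp
        rcases hirr₁ _ (Submodule.map_subtype_le _ _) hWinv with h | h
        · refine LinearMap.ker_eq_bot'.2 fun v hv => ?_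
          have hx : (v : H) ∈ (LinearMap.ker T).map M₁.subtype := ⟨v, hv, rfl⟩
          rw [h, Submodule.mem_bot] at hx
          exact Subtype.ext hx
        · exfalso
          apply hv₀
          have hx : (v₀ : H) ∈ (LinearMap.ker T).map M₁.subtype := h.symm ▸ v₀.2
          obtain ⟨u, hu, huv⟩ := hx
          rwa [← show u = v₀ from Subtype.ext huv]
      have hrange : LinearMap.range T = ⊤ := by
        have hWinv : ∀ ξ : K, ∀ x ∈ (LinearMap.range T).map (M₁ᗮ : Submodule ℂ H).subtype,
            ρ ξ x ∈ (LinearMap.range T).map (M₁ᗮ : Submodule ℂ H).subtype := by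
          rintro ξ x ⟨u, hu, rfl⟩
          obtain ⟨w, rfl⟩ := hu
          exact ⟨T ⟨ρ ξ (w : H), hinv₁ ξ (w : H) w.2⟩, ⟨_, rfl⟩,
            hTint ξ w ⟨ρ ξ (w : H), hinv₁ ξ (w : H) w.2⟩ rfl⟩
        rcases hirr₂ _ (Submodule.map_subtype_le _ _) hWinv with h | h
        · exfalso
          apply hv₀
          have hx : ((T v₀ : (M₁ᗮ : Submodule ℂ H)) : H)
              ∈ (LinearMap.range T).map (M₁ᗮ : Submodule ℂ H).subtype := ⟨T v₀, ⟨v₀, rfl⟩, rfl⟩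
          rw [h, Submodule.mem_bot] at hx
          exact ZeroMemClass.coe_eq_zero.1 hx
        · refine LinearMap.range_eq_top.2 fun y => ?_
          have hx : (y : H) ∈ (LinearMap.range T).map (M₁ᗮ : Submodule ℂ H).subtype := h.symm ▸ y.2
          obtain ⟨u, ⟨w, rfl⟩, huy⟩ := hx
          exact ⟨w, Subtype.ext huy⟩
      exact hineq ⟨LinearEquiv.ofBijective T
        ⟨LinearMap.ker_eq_bot.1 hker, LinearMap.range_eq_top.1 hrange⟩,
        fun ξ v w hw => hTint ξ v w hw⟩
    have hSM₁ : ∀ v ∈ M₁, S v ∈ M₁ := by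
      intro v hv
      have h0 : (T ⟨v, hv⟩ : H) = 0 := by rw [hT0]; rfl
      rw [hT_apply] at h0
      have h0' : Submodule.orthogonalProjectionOnto M₁ᗮ (S v) = 0 := ZeroMemClass.coe_eq_zero.1 h0
      have h1 := Submodule.orthogonalProjectionOnto_eq_zero_iff.1 h0'
      rwa [hoo] at h1
    have hSM₂ : ∀ v ∈ (M₁ᗮ : Submodule ℂ H), S v ∈ (M₁ᗮ : Submodule ℂ H) := by
      intro v hv
      rw [Submodule.mem_orthogonal]
      intro u hu
      rw [← hsa u v]
      exact (Submodule.mem_orthogonal _ _).1 hv (S u) (hSM₁ u hu)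
    obtain ⟨c₁, hc₁⟩ := aux_scalar ρ S M₁ hne₁ hinv₁ hirr₁ hSM₁ hcomm
    obtain ⟨c₂, hc₂⟩ := aux_scalar ρ S M₁ᗮ hne₂ hinv₂ hirr₂ hSM₂ hcomm
    have htrace : ∀ (M : Submodule ℂ H) (c : ℂ), (∀ v ∈ M, S v = c • v) →
        (∀ {ι : Type} [Fintype ι], ∀ b : OrthonormalBasis ι ℂ M,
          (∀ i, ‖((b i : M) : H)‖ = 1) →
          (∑ i, ∑ ξ : K, ‖(inner ℂ ((b i : M) : H) (ρ ξ f) : ℂ)‖ ^ 2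
            = (Fintype.card K : ℝ) * ‖(Submodule.orthogonalProjectionOnto M f : H)‖ ^ 2) →
        c * (Fintype.card ι : ℂ)
          = (((Fintype.card K : ℝ) * ‖(Submodule.orthogonalProjectionOnto M f : H)‖ ^ 2 : ℝ) : ℂ)) := by
      intro M c hc ι _ b hbnorm htr
      have h2 : ∀ i, (inner ℂ ((b i : M) : H) (S ((b i : M) : H)) : ℂ) = c := by
        intro i
        rw [hc _ (b i).2, inner_smul_right, inner_self_eq_norm_sq_to_K, hbnorm i]
        simp
      have h3 : ∑ i, (inner ℂ ((b i : M) : H) (S ((b i : M) : H)) : ℂ) = c * (Fintype.card ι : ℂ) := by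
        rw [Finset.sum_congr rfl fun i _ => h2 i, Finset.sum_const, Finset.card_univ,
          nsmul_eq_mul]
        ring
      have h1 : ∑ i, (inner ℂ ((b i : M) : H) (S ((b i : M) : H)) : ℂ)
          = ((∑ i, ∑ ξ : K, ‖(inner ℂ ((b i : M) : H) (ρ ξ f) : ℂ)‖ ^ 2 : ℝ) : ℂ) := by
        rw [Finset.sum_congr rfl fun i _ => hquad _]
        norm_cast
      rw [← h3, h1, htr]
    have htr₁ := htrace M₁ c₁ hc₁ (stdOrthonormalBasis ℂ M₁) hb₁ tr₁
    have htr₂ := htrace M₁ᗮ c₂ hc₂ (stdOrthonormalBasis ℂ (M₁ᗮ : Submodule ℂ H)) hb₂ tr₂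
    rw [Fintype.card_fin] at htr₁ htr₂
    set A : ℝ := (Fintype.card K : ℝ) * ‖(Submodule.orthogonalProjectionOnto M₁ f : H)‖ ^ 2
      / (Module.finrank ℂ M₁ : ℝ) with hA
    have hA₂ : A = (Fintype.card K : ℝ) * ‖(Submodule.orthogonalProjectionOnto M₁ᗮ f : H)‖ ^ 2
        / (Module.finrank ℂ (M₁ᗮ : Submodule ℂ H) : ℝ) := by
      rw [hA, mul_div_assoc, hratio, ← mul_div_assoc]
    have hc₁A : c₁ = (A : ℂ) := by
      have hd : ((Module.finrank ℂ M₁ : ℝ) : ℂ) ≠ 0 := by exact_mod_cast hd₁.ne'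
      rw [hA]
      push_cast
      rw [eq_div_iff (by exact_mod_cast hd)]
      push_cast at htr₁
      linear_combination htr₁
    have hc₂A : c₂ = (A : ℂ) := by
      have hd : ((Module.finrank ℂ (M₁ᗮ : Submodule ℂ H) : ℝ) : ℂ) ≠ 0 := by
        exact_mod_cast hd₂.ne'
      rw [hA₂]
      push_cast
      rw [eq_div_iff (by exact_mod_cast hd)]
      push_cast at htr₂
      linear_combination htr₂
    have hp₁pos : 0 < ‖(Submodule.orthogonalProjectionOnto M₁ f : H)‖ ^ 2 := by
      rcases (norm_nonneg (Submodule.orthogonalProjectionOnto M₁ f : H)).lt_or_eq with h | h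
      · positivity
      · exfalso
        have hp₁0 : ‖(Submodule.orthogonalProjectionOnto M₁ f : H)‖ ^ 2 = 0 := by rw [← h]; ring
        have h' : ‖(Submodule.orthogonalProjectionOnto M₁ᗮ f : H)‖ ^ 2
            / (Module.finrank ℂ (M₁ᗮ : Submodule ℂ H) : ℝ) = 0 := by
          rw [← hratio, hp₁0, zero_div]
        have hp₂0 : ‖(Submodule.orthogonalProjectionOnto M₁ᗮ f : H)‖ ^ 2 = 0 :=
          (div_eq_zero_iff.1 h').resolve_right hd₂.ne'
        apply hf
        have h1 : (Submodule.orthogonalProjectionOnto M₁ f : H) = 0 := by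
          rw [← norm_eq_zero, ← h]
        have h2 : (Submodule.orthogonalProjectionOnto M₁ᗮ f : H) = 0 := by
          rw [← norm_eq_zero]
          exact pow_eq_zero_iff (n := 2) (by norm_num) |>.1 hp₂0
        rw [← aux_add M₁ f, h1, h2, add_zero]
    have hApos : 0 < A := by
      rw [hA]
      exact div_pos (mul_pos hcK hp₁pos) hd₁
    refine ⟨A, hApos, fun g => ?_⟩
    have hdec := aux_add M₁ g
    have hg : S g = (A : ℂ) • g := by
      calc S g = S ((Submodule.orthogonalProjectionOnto M₁ g : H) + (Submodule.orthogonalProjectionOnto M₁ᗮ g : H)) := by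
            rw [hdec]
        _ = S (Submodule.orthogonalProjectionOnto M₁ g : H) + S (Submodule.orthogonalProjectionOnto M₁ᗮ g : H) :=
            map_add _ _ _
        _ = (A : ℂ) • (Submodule.orthogonalProjectionOnto M₁ g : H)
              + (A : ℂ) • (Submodule.orthogonalProjectionOnto M₁ᗮ g : H) := by
            rw [hc₁ _ (Submodule.orthogonalProjectionOnto M₁ g).2, hc₂ _ (Submodule.orthogonalProjectionOnto M₁ᗮ g).2,
              hc₁A, hc₂A]
        _ = (A : ℂ) • g := by rw [← smul_add, hdec]
    have h1 := hquad g
    rw [hg, inner_smul_right, inner_self_eq_norm_sq_to_K] at h1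
    have h2 : ((∑ ξ : K, ‖(inner ℂ g (ρ ξ f) : ℂ)‖ ^ 2 : ℝ) : ℂ) = ((A * ‖g‖ ^ 2 : ℝ) : ℂ) := by
      rw [← h1]
      push_cast
      rfl
    exact_mod_cast h2
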